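/- arXiv:1901.09136 — 2 statements merged into one kernel-verified Lean document; each statement's English description precedes it below -/
import Mathlib

section
/- If two probability distributions p and q on a finite set have the same marginals under M, and p is a Gibbs distribution p(x) = exp((Mᵀθ)(x))/Z, then H(q) ≤ H(p), with the gap equal to the KL divergence: H(p) − H(q) = KL(q ‖ p) whenever q is absolutely continuous with respect to p. -/
/-- If `p` is a Gibbs distribution `p x = exp ((Mᵀ θ) x) / Z` and `q` is any
probability distribution with the same marginals under `M`, then
`H q ≤ H p`, and the entropy gap equals the KL divergence:
`H p - H q = KL(q ‖ p)` (here `p > 0`, so `q` is automatically absolutely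
continuous with respect to `p`). -/
theorem gibbs_entropy_gap_eq_KL {X I : Type*} [Fintype X] [Fintype I]
    (M : (X → ℝ) →ₗ[ℝ] (I → ℝ)) (Mt : (I → ℝ) →ₗ[ℝ] (X → ℝ))
    (hadj : ∀ (r : X → ℝ) (θ : I → ℝ), ∑ i, M r i * θ i = ∑ x, r x * Mt θ x)
    (θ : I → ℝ) (Z : ℝ) (hZ : Z = ∑ x, Real.exp (Mt θ x))
    (p : X → ℝ) (hp : ∀ x, p x = Real.exp (Mt θ x) / Z)
    (hp1 : ∑ x, p x = 1)
    (q : X → ℝ) (hq0 : ∀ x, 0 ≤ q x) (hq1 : ∑ x, q x = 1)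
    (hmarg : M q = M p) :
    (-∑ x, q x * Real.log (q x) ≤ -∑ x, p x * Real.log (p x)) ∧
    (-∑ x, p x * Real.log (p x)) - (-∑ x, q x * Real.log (q x))
      = ∑ x, q x * Real.log (q x / p x) := by
  have hXne : Nonempty X := by
    by_contra h
    rw [not_nonempty_iff] at h
    simp at hp1
  have hZpos : 0 < Z := by
    rw [hZ]
    exact Finset.sum_pos (fun x _ => Real.exp_pos _) Finset.univ_nonempty
  have hppos : ∀ x, 0 < p x := fun x => by rw [hp]; positivity
  have hlogp : ∀ x, Real.log (p x) = Mt θ x - Real.log Z := by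
    intro x
    rw [hp, Real.log_div (Real.exp_ne_zero _) (ne_of_gt hZpos), Real.log_exp]
  have hsum : ∑ x, q x * Mt θ x = ∑ x, p x * Mt θ x := by
    have hq' := hadj q θ
    have hp' := hadj p θ
    rw [hmarg] at hq'
    rw [← hq', ← hp']
  have key : ∑ x, q x * Real.log (p x) = ∑ x, p x * Real.log (p x) := by
    simp only [hlogp, mul_sub]
    rw [Finset.sum_sub_distrib, Finset.sum_sub_distrib, hsum,
        ← Finset.sum_mul, ← Finset.sum_mul, hp1, hq1]
  have hKLrw : ∑ x, q x * Real.log (q x / p x)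
      = ∑ x, q x * Real.log (q x) - ∑ x, q x * Real.log (p x) := by
    rw [← Finset.sum_sub_distrib]
    refine Finset.sum_congr rfl fun x _ => ?_
    rcases eq_or_lt_of_le (hq0 x) with h | h
    · simp [← h]
    · rw [Real.log_div (ne_of_gt h) (ne_of_gt (hppos x)), mul_sub]
  have hKLnn : 0 ≤ ∑ x, q x * Real.log (q x / p x) := by
    have hpt : ∀ x ∈ Finset.univ, q x - p x ≤ q x * Real.log (q x / p x) := by
      intro x _
      rcases eq_or_lt_of_le (hq0 x) with h | h
      · rw [← h]; simp; exact le_of_lt (hppos x)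
      · have h1 : Real.log (p x / q x) ≤ p x / q x - 1 :=
          Real.log_le_sub_one_of_pos (div_pos (hppos x) h)
        rw [Real.log_div (ne_of_gt (hppos x)) (ne_of_gt h)] at h1
        rw [Real.log_div (ne_of_gt h) (ne_of_gt (hppos x))]
        have h3 : q x * (p x / q x - 1) = p x - q x := by field_simp
        nlinarith [mul_le_mul_of_nonneg_left h1 h.le]
    calc (0:ℝ) = ∑ x, q x - ∑ x, p x := by rw [hq1, hp1]; ring
    _ = ∑ x, (q x - p x) := (Finset.sum_sub_distrib _ _).symm
    _ ≤ _ := Finset.sum_le_sum hpt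
  constructor
  · have h := hKLnn
    rw [hKLrw, key] at h
    linarith
  · rw [hKLrw, key]; ring
end

section
/- If μ lies in the relative interior of the marginal polytope M(S) of a finite set X under linear map M, then there exists a strictly positive probability distribution p on X with M p = μ. -/
/-- If `μ` lies in the relative interior (intrinsic interior) of the marginal
polytope `M '' S`, then `μ` is the marginal vector of some strictly positive
probability distribution. -/
theorem relint_marginal_polytope_strictly_positive
    {X I : Type*} [Fintype X] [Fintype I] [Nonempty X]
    (M : (X → ℝ) →ₗ[ℝ] (I → ℝ)) (μ : I → ℝ)
    (hμ : μ ∈ intrinsicInterior ℝ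
      (M '' {p : X → ℝ | (∀ x, 0 ≤ p x) ∧ ∑ x, p x = 1})) :
    ∃ p : X → ℝ, (∀ x, 0 < p x) ∧ ∑ x, p x = 1 ∧ M p = μ := by
  set s : Set (I → ℝ) := M '' {p : X → ℝ | (∀ x, 0 ≤ p x) ∧ ∑ x, p x = 1} with hs
  -- the uniform distribution
  set n : ℝ := (Fintype.card X : ℝ) with hn
  have hnpos : 0 < n := by positivity
  set u : X → ℝ := fun _ => n⁻¹ with hu
  have hu_mem : u ∈ {p : X → ℝ | (∀ x, 0 ≤ p x) ∧ ∑ x, p x = 1} := by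
    constructor
    · intro x; positivity
    · simp [hu, Finset.sum_const, hn]
  have hMu : M u ∈ s := ⟨u, hu_mem, rfl⟩
  -- μ itself is in s
  have hμs : μ ∈ s := intrinsicInterior_subset hμ
  -- membership in affine span
  have hμspan : μ ∈ affineSpan ℝ s := subset_affineSpan ℝ s hμs
  have hMuspan : M u ∈ affineSpan ℝ s := subset_affineSpan ℝ s hMu
  obtain ⟨w, hw_int, hw⟩ := mem_intrinsicInterior.mp hμ
  -- the line through M u and μ, inside the affine span
  set g : ℝ → affineSpan ℝ s := fun t =>
    ⟨AffineMap.lineMap (M u) μ t, AffineMap.lineMap_mem t hMuspan hμspan⟩ with hg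
  have hg_cont : Continuous g := by
    apply Continuous.subtype_mk
    have : Continuous fun t : ℝ => AffineMap.lineMap (M u) μ t := by
      simp only [AffineMap.lineMap_apply_module]
      fun_prop
    exact this
  have hg1 : g 1 = w := by
    apply Subtype.ext
    simp [hg, hw]
  have hopen : IsOpen (g ⁻¹' interior (((↑) : affineSpan ℝ s → I → ℝ) ⁻¹' s)) :=
    isOpen_interior.preimage hg_cont
  have h1mem : (1 : ℝ) ∈ g ⁻¹' interior (((↑) : affineSpan ℝ s → I → ℝ) ⁻¹' s) := by
    simp [Set.mem_preimage, hg1, hw_int]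
  obtain ⟨δ, hδpos, hball⟩ := Metric.isOpen_iff.mp hopen 1 h1mem
  set ε : ℝ := δ / 2 with hε
  have hεpos : 0 < ε := by positivity
  have htmem : (1 + ε) ∈ Metric.ball (1 : ℝ) δ := by
    simp only [Metric.mem_ball, Real.dist_eq]
    rw [add_comm, add_sub_cancel_right, abs_of_pos hεpos]
    linarith
  have hz : AffineMap.lineMap (M u) μ (1 + ε) ∈ s := by
    have := interior_subset (hball htmem)
    simpa [hg] using this
  obtain ⟨q, hq, hMq⟩ := hz
  -- combine q with the uniform distribution
  have h1ε : (0:ℝ) < 1 + ε := by linarith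
  refine ⟨(1 + ε)⁻¹ • q + (ε / (1 + ε)) • u, ?_, ?_, ?_⟩
  · intro x
    have hq0 := hq.1 x
    have : 0 < (ε / (1 + ε)) * u x := by
      simp [hu]; positivity
    simp only [Pi.add_apply, Pi.smul_apply, smul_eq_mul]
    nlinarith [inv_nonneg.mpr h1ε.le]
  · simp only [Pi.add_apply, Pi.smul_apply, smul_eq_mul, ← Finset.mul_sum,
      Finset.sum_add_distrib]
    rw [hq.2, hu_mem.2]
    field_simp
  · have hMq' : M q = (1 - (1 + ε)) • M u + (1 + ε) • μ := by
      rw [hMq]; rw [AffineMap.lineMap_apply_module]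
    rw [map_add, map_smul, map_smul, hMq']
    rw [smul_add, smul_smul, smul_smul]
    have e1 : (1 + ε)⁻¹ * (1 + ε) = 1 := inv_mul_cancel₀ h1ε.ne'
    have e2 : ε / (1 + ε) + (1 + ε)⁻¹ * (1 - (1 + ε)) = 0 := by
      field_simp
      ring
    rw [e1, one_smul, add_comm, ← add_assoc, ← add_smul, e2, zero_smul, zero_add]
end
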